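/- Let L be a positive isomorphism on a complex Hilbert space with ⟨Lx,x⟩ ≥ c > 0 for unit x. If T is a self-adjoint operator with ‖L − T‖ < min(1/‖L⁻¹‖, c/2), then the spectrum of T is contained in the open interval (c/3, ‖L‖ + c/2). -/

import Mathlib

/-- If `L` is a positive isomorphism with inverse `L'` and `⟨Lx,x⟩ ≥ c > 0` on
unit vectors, and `T` is self-adjoint with `‖L - T‖ < min (1/‖L'‖) (c/2)`, then
`σ(T) ⊆ (c/3, ‖L‖ + c/2)`. -/
theorem spectrum_perturbation_subset_Ioo
    {H : Type*} [NormedAddCommGroup H] [InnerProductSpace ℂ H] [CompleteSpace H]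
    (L L' T : H →L[ℂ] H)
    (hsa : IsSelfAdjoint L) (hinv₁ : L * L' = 1) (hinv₂ : L' * L = 1)
    (hpos : ∀ x : H, x ≠ 0 → 0 < (inner ℂ (L x) x : ℂ).re)
    (c : ℝ) (hc : 0 < c) (hlb : ∀ x : H, ‖x‖ = 1 → c ≤ (inner ℂ (L x) x : ℂ).re)
    (hTsa : IsSelfAdjoint T)
    (hnear : ‖L - T‖ < min (1 / ‖L'‖) (c / 2)) :
    spectrum ℂ T ⊆ (fun t : ℝ => (t : ℂ)) '' Set.Ioo (c / 3) (‖L‖ + c / 2) := by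
  have hLT : ‖L - T‖ < c / 2 := lt_of_lt_of_le hnear (min_le_right _ _)
  -- quadratic lower bound for T
  have hquad : ∀ x : H, (c / 2) * ‖x‖ ^ 2 ≤ (inner ℂ (T x) x : ℂ).re := by
    intro x
    rcases eq_or_ne x 0 with rfl | hx0
    · simp
    · have hxn : (0:ℝ) < ‖x‖ := norm_pos_iff.mpr hx0
      have hu : ‖(‖x‖⁻¹ : ℂ) • x‖ = 1 := by
        simp [norm_smul, inv_mul_cancel₀ hxn.ne']
      have h1 := hlb _ hu
      have h2 : (inner ℂ (L ((‖x‖⁻¹ : ℂ) • x)) ((‖x‖⁻¹ : ℂ) • x) : ℂ)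
          = ((‖x‖⁻¹ : ℂ))^2 * inner ℂ (L x) x := by
        rw [map_smul, inner_smul_left, inner_smul_right]
        push_cast
        ring_nf
        simp [Complex.conj_ofReal]
        ring_nf
        try tauto
      have hLlb : c * ‖x‖^2 ≤ (inner ℂ (L x) x : ℂ).re := by
        rw [h2] at h1
        have : ((‖x‖⁻¹ : ℂ))^2 = ((‖x‖⁻¹^2 : ℝ) : ℂ) := by push_cast; ring
        rw [this, Complex.re_ofReal_mul] at h1
        have h3 : c ≤ ‖x‖⁻¹^2 * (inner ℂ (L x) x : ℂ).re := h1
        calc c * ‖x‖^2 ≤ (‖x‖⁻¹^2 * (inner ℂ (L x) x : ℂ).re) * ‖x‖^2 := by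
              nlinarith [sq_nonneg ‖x‖]
          _ = (inner ℂ (L x) x : ℂ).re := by
              field_simp
      have hdiff : (inner ℂ ((L - T) x) x : ℂ).re ≤ (c/2) * ‖x‖^2 := by
        calc (inner ℂ ((L - T) x) x : ℂ).re ≤ ‖(inner ℂ ((L - T) x) x : ℂ)‖ := Complex.re_le_norm _
          _ ≤ ‖(L - T) x‖ * ‖x‖ := norm_inner_le_norm _ _
          _ ≤ (‖L - T‖ * ‖x‖) * ‖x‖ := by
              have := (L - T).le_opNorm x
              nlinarith
          _ ≤ (c/2) * ‖x‖^2 := by nlinarith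
      have hsplit : (inner ℂ (T x) x : ℂ).re
          = (inner ℂ (L x) x : ℂ).re - (inner ℂ ((L - T) x) x : ℂ).re := by
        simp [inner_sub_left]
      rw [hsplit]; linarith
  intro μ hμ
  rcases subsingleton_or_nontrivial H with hH | hH
  · exact absurd hμ (by rw [spectrum.notMem_iff]; exact isUnit_of_subsingleton _)
  have hre : μ = (μ.re : ℂ) := hTsa.mem_spectrum_eq_re hμ
  refine ⟨μ.re, ⟨?_, ?_⟩, hre.symm⟩
  · -- lower bound
    by_contra hle
    push_neg at hle
    apply spectrum.notMem_iff.mpr _ hμ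
    have hkey : IsUnit ((algebraMap ℂ (H →L[ℂ] H)) μ - T) := by
      refine ContinuousLinearMap.isUnit_of_forall_le_norm_inner_map _ (c := ⟨c/6, by linarith⟩)
        (by exact_mod_cast (by linarith : (0:ℝ) < c/6)) ?_
      intro x
      have happ : ((algebraMap ℂ (H →L[ℂ] H)) μ - T) x = μ • x - T x := by
        simp [Algebra.algebraMap_eq_smul_one]
      have hre' : (inner ℂ (((algebraMap ℂ (H →L[ℂ] H)) μ - T) x) x : ℂ).re
          = μ.re * ‖x‖^2 - (inner ℂ (T x) x : ℂ).re := by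
        rw [happ]
        rw [inner_sub_left, inner_smul_left]
        rw [hre]
        simp [Complex.conj_ofReal, inner_self_eq_norm_sq]
        left
        rw [← inner_self_eq_norm_sq (𝕜 := ℂ) x]
        rw [inner_self_eq_norm_sq_to_K]; rfl
      have h1 : (c/6) * ‖x‖^2 ≤ -(inner ℂ (((algebraMap ℂ (H →L[ℂ] H)) μ - T) x) x : ℂ).re := by
        rw [hre']
        have := hquad x
        nlinarith [sq_nonneg ‖x‖]
      calc ‖x‖^2 * ((⟨c/6, by linarith⟩ : NNReal) : ℝ) = (c/6) * ‖x‖^2 := by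
            push_cast; ring
        _ ≤ -(inner ℂ (((algebraMap ℂ (H →L[ℂ] H)) μ - T) x) x : ℂ).re := h1
        _ ≤ ‖(inner ℂ (((algebraMap ℂ (H →L[ℂ] H)) μ - T) x) x : ℂ)‖ := by
            have := Complex.abs_re_le_norm (inner ℂ (((algebraMap ℂ (H →L[ℂ] H)) μ - T) x) x : ℂ)
            have := neg_abs_le (inner ℂ (((algebraMap ℂ (H →L[ℂ] H)) μ - T) x) x : ℂ).re
            linarith
      done
    exact hkey
  · -- upper bound
    have h1 : ‖μ‖ ≤ ‖T‖ := spectrum.norm_le_norm_of_mem hμ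
    have h2 : ‖T‖ ≤ ‖L‖ + ‖L - T‖ := by
      have := norm_sub_norm_le T L
      rw [← norm_neg (T - L), neg_sub] at this
      linarith
    have h3 : μ.re ≤ ‖μ‖ := Complex.re_le_norm μ
    linarith
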